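/- Let N ∈ ℕ, let ι_0 ∈ ℂ^{N×N} be invertible, let λ₀ ∈ ℂ with λ₀ ≠ 0, and let j ∈ ℕ. Suppose ι is a matrix-valued function, defined and invertible on a punctured neighborhood of λ₀, such that the function λ ↦ ι(λ)^{-1} does not agree near λ₀ with any matrix-valued function analytic at λ₀. Then there exists f ∈ ℂ^N such that the function λ ↦ λ^j·(f − ι(λ)^{-1}·ι_0·f), defined on the punctured neighborhood, does not agree near λ₀ with any function analytic at λ₀. -/

import Mathlib

open Filter

/-- The columns of the pointwise resolvent of the inverse power operator inherit
every singularity of `ι⁻¹`: if `λ ↦ ι(λ)⁻¹` does not extend analytically to `λ₀ ≠ 0`,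
then for some vector `f` the function `λ ↦ λ^j·(f − ι(λ)⁻¹·ι₀·f)` does not extend
analytically to `λ₀` either. -/
theorem pointwise_resolvent_inherits_singularity
    (N : ℕ) (ι₀ : Matrix (Fin N) (Fin N) ℂ) (hι₀ : IsUnit ι₀)
    (μ₀ : ℂ) (hμ₀ : μ₀ ≠ 0) (j : ℕ)
    (ι : ℂ → Matrix (Fin N) (Fin N) ℂ)
    (hinv : ∀ᶠ w in nhdsWithin μ₀ {μ₀}ᶜ, IsUnit (ι w))
    (hsing : ¬ ∃ g : ℂ → Matrix (Fin N) (Fin N) ℂ,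
      (∀ a b : Fin N, AnalyticAt ℂ (fun w => g w a b) μ₀) ∧
      ∀ᶠ w in nhdsWithin μ₀ {μ₀}ᶜ, g w = (ι w)⁻¹) :
    ∃ f : Fin N → ℂ,
      ¬ ∃ h : ℂ → Fin N → ℂ,
        (∀ a : Fin N, AnalyticAt ℂ (fun w => h w a) μ₀) ∧
        ∀ᶠ w in nhdsWithin μ₀ {μ₀}ᶜ,
          h w = w ^ j • (f - ((ι w)⁻¹).mulVec (ι₀.mulVec f)) := by
  by_contra hcon
  push_neg at hcon
  apply hsing
  -- for each basis vector get an analytic extension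
  choose h hh₁ hh₂ using fun b : Fin N => hcon (Pi.single b 1)
  have hdet : IsUnit ι₀.det := (Matrix.isUnit_iff_isUnit_det ι₀).mp hι₀
  -- candidate extension of ι⁻¹ * ι₀
  set M : ℂ → Matrix (Fin N) (Fin N) ℂ :=
    fun w => Matrix.of fun a b => Pi.single (M := fun _ => ℂ) b 1 a - h b w a / w ^ j with hM
  refine ⟨fun w => M w * ι₀⁻¹, ?_, ?_⟩
  · intro a b
    have hMac : ∀ c : Fin N, AnalyticAt ℂ (fun w => M w a c) μ₀ := by
      intro c
      exact analyticAt_const.sub (((hh₁ c) a).div ((analyticAt_id).pow j)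
        (pow_ne_zero j hμ₀))
    have : AnalyticAt ℂ (fun w => ∑ c, M w a c * ι₀⁻¹ c b) μ₀ :=
      Finset.analyticAt_fun_sum _ (fun c _ => (hMac c).mul analyticAt_const)
    simpa [Matrix.mul_apply] using this
  · have hne0 : ∀ᶠ w in nhdsWithin μ₀ {μ₀}ᶜ, w ≠ 0 :=
      ((eventually_ne_nhds hμ₀).filter_mono nhdsWithin_le_nhds)
    have hall : ∀ᶠ w in nhdsWithin μ₀ {μ₀}ᶜ, ∀ b : Fin N,
        h b w = w ^ j • (Pi.single b 1 - ((ι w)⁻¹).mulVec (ι₀.mulVec (Pi.single b 1))) :=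
      eventually_all.2 hh₂
    filter_upwards [hinv, hne0, hall] with w hw hw0 hweq
    have hwj : (w : ℂ) ^ j ≠ 0 := pow_ne_zero j hw0
    have hMeq : M w = (ι w)⁻¹ * ι₀ := by
      funext a b
      have := congrFun (hweq b) a
      simp only [Pi.smul_apply, Pi.sub_apply, smul_eq_mul] at this
      have hdiv : h b w a / w ^ j
          = Pi.single (M := fun _ => ℂ) b 1 a - ((ι w)⁻¹).mulVec (ι₀.mulVec (Pi.single b 1)) a := by
        rw [this]; field_simp
      have hcol : ((ι w)⁻¹).mulVec (ι₀.mulVec (Pi.single b 1)) a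
          = ((ι w)⁻¹ * ι₀) a b := by
        rw [Matrix.mulVec_mulVec]
        simp [Matrix.mulVec_single]
      simp only [hM, Matrix.of_apply]
      rw [hdiv, hcol]
      ring
    rw [hMeq, Matrix.mul_assoc, Matrix.mul_nonsing_inv ι₀ hdet, Matrix.mul_one]
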